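/- If a system of linear inequalities A·x ≤ b with integer matrix A (N×d) and integer vector b has a solution, then it has a rational solution x_s with s(x_s) ≤ (d+1)·L + (2d+1)·log₂(2d+1), where L = max(s(A), s(b)) and s denotes bit-size. -/

import Mathlib

/-- Bit-size of an integer. -/
def isize (z : ℤ) : ℕ := z.natAbs.size

/-- Bit-size of a rational (in lowest terms). -/
def qsize (x : ℚ) : ℕ := max x.num.natAbs.size x.den.size

open Matrix in
lemma exists_perp (d : ℕ) (W : Submodule ℝ (Fin d → ℝ)) (u : Fin d → ℝ) (hu : u ∉ W) :
    ∃ v : Fin d → ℝ, (∀ w ∈ W, w ⬝ᵥ v = 0) ∧ 0 < u ⬝ᵥ v := by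
  classical
  let f : (Fin d → ℝ) ≃ₗ[ℝ] EuclideanSpace ℝ (Fin d) :=
    (WithLp.linearEquiv 2 ℝ (Fin d → ℝ)).symm
  let W2 : Submodule ℝ (EuclideanSpace ℝ (Fin d)) := W.map (f : (Fin d → ℝ) →ₗ[ℝ] EuclideanSpace ℝ (Fin d))
  have hu2 : f u ∉ W2 := by
    intro h
    obtain ⟨w, hw, hwe⟩ := h
    exact hu (by simpa using (f.injective hwe ▸ hw))
  set p : EuclideanSpace ℝ (Fin d) := (Submodule.orthogonalProjection W2 (f u) : EuclideanSpace ℝ (Fin d)) with hp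
  set v2 : EuclideanSpace ℝ (Fin d) := f u - p with hv2def
  have hv2 : v2 ∈ W2ᗮ := W2.sub_starProjection_mem_orthogonal (f u)
  have hv2ne : v2 ≠ 0 := by
    intro h
    apply hu2
    have : f u = p := by rwa [sub_eq_zero] at h
    rw [this]; exact (Submodule.orthogonalProjection W2 (f u)).2
  have hdot : ∀ w : Fin d → ℝ, w ⬝ᵥ (f.symm v2) = inner ℝ (f w) v2 := by
    intro w
    rw [PiLp.inner_apply]
    simp [dotProduct, f, RCLike.inner_apply', conj_trivial]
    exact Finset.sum_congr rfl fun _ _ => mul_comm _ _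
  refine ⟨f.symm v2, ?_, ?_⟩
  · intro w hw
    rw [hdot]
    exact (Submodule.mem_orthogonal W2 v2).mp hv2 (f w) ⟨w, hw, rfl⟩
  · rw [hdot]
    have hpv : inner ℝ p v2 = (0:ℝ) := (Submodule.mem_orthogonal W2 v2).mp hv2 p (Submodule.orthogonalProjection W2 (f u)).2
    have hfu : f u = v2 + p := by rw [hv2def]; abel
    have : inner ℝ (f u) v2 = (inner ℝ v2 v2 : ℝ) + inner ℝ p v2 := by
      rw [hfu, inner_add_left]
    rw [this, hpv, add_zero, real_inner_self_eq_norm_sq]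
    exact pow_pos (norm_pos_iff.mpr hv2ne) 2
open Matrix Finset Module in
lemma tight_span {N d : ℕ} (a : Fin N → (Fin d → ℝ)) (b : Fin N → ℝ)
    (x : Fin d → ℝ) (hx : ∀ i, a i ⬝ᵥ x ≤ b i) :
    ∃ x' : Fin d → ℝ, (∀ i, a i ⬝ᵥ x' ≤ b i) ∧
      (∀ i, a i ∈ Submodule.span ℝ (a '' {k | a k ⬝ᵥ x' = b k})) := by
  classical
  set W : (Fin d → ℝ) → Submodule ℝ (Fin d → ℝ) :=
    fun y => Submodule.span ℝ (a '' {k | a k ⬝ᵥ y = b k}) with hW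
  suffices h : ∀ n : ℕ, ∀ y : Fin d → ℝ, (∀ i, a i ⬝ᵥ y ≤ b i) →
      d ≤ n + finrank ℝ (W y) → ∃ x', (∀ i, a i ⬝ᵥ x' ≤ b i) ∧ ∀ i, a i ∈ W x' by
    exact h d x hx (Nat.le_add_right _ _)
  intro n
  induction n with
  | zero =>
    intro y hy hrank
    have htop : W y = ⊤ := by
      apply Submodule.eq_top_of_finrank_eq
      have h1 : finrank ℝ (W y) ≤ finrank ℝ (Fin d → ℝ) := Submodule.finrank_le _
      have h2 : finrank ℝ (Fin d → ℝ) = d := by simp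
      omega
    exact ⟨y, hy, fun i => by rw [htop]; trivial⟩
  | succ n ih =>
    intro y hy hrank
    by_cases hall : ∀ i, a i ∈ W y
    · exact ⟨y, hy, hall⟩
    push_neg at hall
    obtain ⟨i₀, hi₀⟩ := hall
    obtain ⟨v, hvW, hvi⟩ := exists_perp d (W y) (a i₀) hi₀
    have hv0 : ∀ k, a k ⬝ᵥ y = b k → a k ⬝ᵥ v = 0 := fun k hk =>
      hvW (a k) (Submodule.subset_span ⟨k, hk, rfl⟩)
    set K : Finset (Fin N) := univ.filter (fun k => 0 < a k ⬝ᵥ v) with hK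
    have hKne : K.Nonempty := ⟨i₀, by simp [hK, hvi]⟩
    set t : ℝ := K.inf' hKne (fun k => (b k - a k ⬝ᵥ y) / (a k ⬝ᵥ v)) with ht
    have ht0 : 0 ≤ t := by
      apply Finset.le_inf'
      intro k hk
      rw [hK, mem_filter] at hk
      exact div_nonneg (by linarith [hy k]) hk.2.le
    set x' : Fin d → ℝ := y + t • v with hx'
    have hdx : ∀ k, a k ⬝ᵥ x' = a k ⬝ᵥ y + t * (a k ⬝ᵥ v) := by
      intro k
      simp [hx', dotProduct_add, dotProduct_smul, smul_eq_mul]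
    have hx'S : ∀ i, a i ⬝ᵥ x' ≤ b i := by
      intro i
      rw [hdx]
      by_cases hpos : 0 < a i ⬝ᵥ v
      · have hiK : i ∈ K := by simp [hK, hpos]
        have := Finset.inf'_le (fun k => (b k - a k ⬝ᵥ y) / (a k ⬝ᵥ v)) hiK
        rw [← ht] at this
        have := (le_div_iff₀ hpos).mp this
        linarith
      · push_neg at hpos
        nlinarith [hy i]
    obtain ⟨k₀, hk₀K, hk₀⟩ := Finset.exists_mem_eq_inf' hKne
      (fun k => (b k - a k ⬝ᵥ y) / (a k ⬝ᵥ v))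
    rw [hK, mem_filter] at hk₀K
    have hk₀pos : 0 < a k₀ ⬝ᵥ v := hk₀K.2
    have hk₀tight : a k₀ ⬝ᵥ x' = b k₀ := by
      rw [hdx, ht, hk₀, div_mul_cancel₀ _ (ne_of_gt hk₀pos)]
      ring
    have hsub : W y ≤ W x' := by
      apply Submodule.span_mono
      apply Set.image_mono
      intro k hk
      have : a k ⬝ᵥ x' = b k := by rw [hdx, hv0 k hk, mul_zero, add_zero]; exact hk
      exact this
    have hk₀mem : a k₀ ∈ W x' := Submodule.subset_span ⟨k₀, hk₀tight, rfl⟩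
    have hk₀nmem : a k₀ ∉ W y := by
      intro h
      have := hvW (a k₀) h
      linarith
    have hlt : W y < W x' := lt_of_le_of_ne hsub (fun h => hk₀nmem (h ▸ hk₀mem))
    have hfr : finrank ℝ (W y) < finrank ℝ (W x') := Submodule.finrank_lt_finrank_of_lt hlt
    exact ih x' hx'S (by omega)


lemma qsize_div_le (a c : ℤ) (hc : c ≠ 0) (F : ℕ) (ha : a.natAbs ≤ F) (hcF : c.natAbs ≤ F) :
    qsize ((a : ℚ) / (c : ℚ)) ≤ Nat.size F := by
  have hdiv : ((a : ℚ) / (c : ℚ)) = Rat.divInt a c := (Rat.divInt_eq_div a c).symm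
  have hnum : ((a : ℚ) / (c : ℚ)).num.natAbs ≤ F := by
    rcases eq_or_ne a 0 with rfl | ha0
    · simp
    · have hd : ((a : ℚ) / (c : ℚ)).num ∣ a := by rw [hdiv]; exact Rat.num_dvd a hc
      have := Nat.le_of_dvd (Int.natAbs_pos.mpr ha0) (Int.natAbs_dvd_natAbs.mpr hd)
      omega
  have hden : ((a : ℚ) / (c : ℚ)).den ≤ F := by
    have hd : (((a : ℚ) / (c : ℚ)).den : ℤ) ∣ c := by rw [hdiv]; exact Rat.den_dvd a c
    have h2 : ((a : ℚ) / (c : ℚ)).den ∣ c.natAbs := by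
      have := Int.natAbs_dvd_natAbs.mpr hd
      simpa using this
    have := Nat.le_of_dvd (Int.natAbs_pos.mpr hc) h2
    omega
  exact max_le (Nat.size_le_size hnum) (Nat.size_le_size hden)

lemma size_real_le (F : ℕ) (hF : 1 ≤ F) : (Nat.size F : ℝ) ≤ Real.logb 2 F + 1 := by
  have h1 : 2 ^ (Nat.size F - 1) ≤ F := by
    by_contra h
    push_neg at h
    have := Nat.size_le.mpr h
    have hp : 0 < Nat.size F := Nat.size_pos.mpr hF
    omega
  have h2 : ((2 : ℝ)) ^ ((Nat.size F : ℝ) - 1) ≤ (F : ℝ) := by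
    have hp : 0 < Nat.size F := Nat.size_pos.mpr hF
    rw [show ((Nat.size F : ℝ) - 1) = ((Nat.size F - 1 : ℕ) : ℝ) by
      rw [Nat.cast_sub hp]; norm_num]
    rw [Real.rpow_natCast]
    exact_mod_cast h1
  have h3 : (Nat.size F : ℝ) - 1 ≤ Real.logb 2 F := by
    rw [← Real.rpow_le_rpow_left_iff (x := (2:ℝ)) (by norm_num)]
    calc (2:ℝ) ^ ((Nat.size F : ℝ) - 1) ≤ F := h2
    _ = (2:ℝ) ^ Real.logb 2 F := by
        rw [Real.rpow_logb (by norm_num) (by norm_num) (by exact_mod_cast hF)]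
  linarith

lemma final_bound (dd L : ℕ) (hd : 1 ≤ dd) :
    (Nat.size (dd.factorial * 2 ^ (L * dd)) : ℝ) ≤
      ((dd : ℝ) + 1) * L + (2 * dd + 1) * Real.logb 2 (2 * dd + 1) := by
  have hF : 1 ≤ dd.factorial * 2 ^ (L * dd) :=
    Nat.one_le_iff_ne_zero.mpr (by positivity)
  have h1 := size_real_le _ hF
  have hfac : (dd.factorial : ℝ) ≤ ((2 * dd + 1 : ℕ) : ℝ) ^ dd := by
    exact_mod_cast (Nat.factorial_le_pow dd).trans
      (Nat.pow_le_pow_left (by omega) dd)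
  have hlogfac : Real.logb 2 (dd.factorial) ≤ (dd : ℝ) * Real.logb 2 (2 * dd + 1) := by
    calc Real.logb 2 (dd.factorial) ≤ Real.logb 2 (((2 * dd + 1 : ℕ) : ℝ) ^ dd) := by
          exact Real.logb_le_logb_of_le (by norm_num) (by positivity) hfac
      _ = (dd : ℝ) * Real.logb 2 ((2 * dd + 1 : ℕ) : ℝ) := by rw [Real.logb_pow]
      _ = (dd : ℝ) * Real.logb 2 (2 * dd + 1) := by push_cast; ring_nf
  have hsplit : Real.logb 2 ((dd.factorial * 2 ^ (L * dd) : ℕ) : ℝ) =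
      Real.logb 2 (dd.factorial) + (L * dd : ℝ) := by
    push_cast
    rw [Real.logb_mul (by positivity) (by positivity), Real.logb_pow]
    simp [Real.logb_self_eq_one]
  have hlog1 : (1 : ℝ) ≤ Real.logb 2 (2 * dd + 1) := by
    have : (1 : ℝ) ≤ (dd : ℝ) := by exact_mod_cast hd
    calc (1 : ℝ) = Real.logb 2 2 := by simp [Real.logb_self_eq_one]
      _ ≤ Real.logb 2 (2 * dd + 1) :=
        Real.logb_le_logb_of_le (by norm_num) (by norm_num) (by linarith)
  have hL0 : (0 : ℝ) ≤ (L : ℝ) := Nat.cast_nonneg L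
  have hd1 : (1 : ℝ) ≤ (dd : ℝ) := by exact_mod_cast hd
  rw [hsplit] at h1
  nlinarith [h1, hlogfac, hlog1, hL0, hd1]

lemma det_cast_int {n : ℕ} {R : Type*} [CommRing R] (M : Matrix (Fin n) (Fin n) ℤ) :
    (M.map (fun z : ℤ => (z : R))).det = ((M.det : ℤ) : R) := by
  have h := RingHom.map_det (Int.castRingHom R) M
  rw [RingHom.mapMatrix_apply] at h
  simpa using h.symm

theorem small_rational_solution (N d : ℕ) (A : Matrix (Fin N) (Fin d) ℤ) (b : Fin N → ℤ)
    (L : ℕ)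
    (hL : L = max (Finset.univ.sup fun p : Fin N × Fin d => isize (A p.1 p.2))
                  (Finset.univ.sup fun i => isize (b i)))
    (hsol : ∃ x : Fin d → ℝ, ∀ i, ∑ j, (A i j : ℝ) * x j ≤ (b i : ℝ)) :
    ∃ xs : Fin d → ℚ, (∀ i, ∑ j, (A i j : ℚ) * xs j ≤ (b i : ℚ)) ∧
      ∀ j, (qsize (xs j) : ℝ) ≤
        ((d : ℝ) + 1) * L + (2 * d + 1) * Real.logb 2 (2 * d + 1) := by
  classical
  open Matrix in
  obtain ⟨x0, hx0⟩ := hsol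
  set a : Fin N → (Fin d → ℝ) := fun i j => (A i j : ℝ) with ha
  set br : Fin N → ℝ := fun i => (b i : ℝ) with hbr
  have hx0' : ∀ i, a i ⬝ᵥ x0 ≤ br i := by
    intro i; simpa [dotProduct] using hx0 i
  obtain ⟨x, hxS, hspan⟩ := tight_span a br x0 hx0'
  set T : Set (Fin N) := {k | a k ⬝ᵥ x = br k} with hT
  -- entry bounds
  have hA2 : ∀ i j, (A i j).natAbs < 2 ^ L := by
    intro i j
    apply Nat.size_le.mp
    calc isize (A i j) ≤ Finset.univ.sup fun p : Fin N × Fin d => isize (A p.1 p.2) :=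
          Finset.le_sup (f := fun p : Fin N × Fin d => isize (A p.1 p.2)) (Finset.mem_univ (i, j))
      _ ≤ L := by rw [hL]; exact le_max_left _ _
  have hb2 : ∀ i, (b i).natAbs < 2 ^ L := by
    intro i
    apply Nat.size_le.mp
    calc isize (b i) ≤ Finset.univ.sup fun i => isize (b i) :=
          Finset.le_sup (f := fun i => isize (b i)) (Finset.mem_univ i)
      _ ≤ L := by rw [hL]; exact le_max_right _ _
  -- independent subset spanning tight rows
  obtain ⟨s, hs_sub, hs_span, hs_li0⟩ := exists_linearIndependent ℝ (a '' T)
  have hs_li : LinearIndepOn ℝ id s := hs_li0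
  have hst : s ⊆ s ∪ Set.range (fun j : Fin d => (Pi.single j 1 : Fin d → ℝ)) :=
    Set.subset_union_left
  set B : Set (Fin d → ℝ) := hs_li.extend hst with hB
  have hBt : B ⊆ s ∪ Set.range (fun j : Fin d => (Pi.single j 1 : Fin d → ℝ)) :=
    hs_li.extend_subset hst
  have hsB : s ⊆ B := hs_li.subset_extend hst
  have hBli : LinearIndependent ℝ (Subtype.val : B → (Fin d → ℝ)) := (hs_li.linearIndepOn_extend hst).linearIndependent
  have hBspan : ⊤ ≤ Submodule.span ℝ B := by
    have h2 : Submodule.span ℝ (Set.range (fun j : Fin d => (Pi.single j 1 : Fin d → ℝ))) = ⊤ := by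
      rw [show (fun j : Fin d => (Pi.single j 1 : Fin d → ℝ)) = ⇑(Pi.basisFun ℝ (Fin d)) from
        funext fun j => (Pi.basisFun_apply ℝ (Fin d) j).symm]
      exact (Pi.basisFun ℝ (Fin d)).span_eq
    rw [← h2]
    apply Submodule.span_le.mpr
    intro w hw
    exact (hs_li.subset_span_extend hst) (Set.mem_union_right _ hw)
  let bas : Module.Basis B ℝ (Fin d → ℝ) :=
    Module.Basis.mk hBli (by rw [Subtype.range_coe]; exact hBspan)
  let φ : Fin d ≃ B := (bas.indexEquiv (Pi.basisFun ℝ (Fin d))).symm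
  -- integer rows
  have hchoice : ∀ p : Fin d, ∃ (row : Fin d → ℤ) (cc : ℤ),
      ((fun q => ((row q : ℝ))) = (φ p : Fin d → ℝ)) ∧ (∀ q, (row q).natAbs ≤ 2 ^ L) ∧
      cc.natAbs ≤ 2 ^ L ∧
      ((φ p : Fin d → ℝ) ∈ s → (cc : ℝ) = (φ p : Fin d → ℝ) ⬝ᵥ x) := by
    intro p
    have hmem := hBt (φ p).2
    by_cases hin : (φ p : Fin d → ℝ) ∈ s
    · obtain ⟨k, hkT, hka⟩ := hs_sub hin
      refine ⟨A k, b k, ?_, fun q => (hA2 k q).le, (hb2 k).le, fun _ => ?_⟩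
      · rw [← hka]
      · rw [← hka]
        exact hkT.symm
    · obtain ⟨j, hj⟩ := hmem.resolve_left hin
      refine ⟨Pi.single j 1, 0, ?_, ?_, by simp, fun hs' => absurd hs' hin⟩
      · rw [← hj]
        funext q
        by_cases hq : q = j <;> simp [Pi.single_apply, hq]
      · intro q
        by_cases hq : q = j <;> simp [Pi.single_apply, hq, Nat.one_le_two_pow]
  choose M cz hrow hMb hczb hcs using hchoice
  set Mz : Matrix (Fin d) (Fin d) ℤ := Matrix.of M with hMz
  -- determinant nonzero
  have hrowsli : LinearIndependent ℝ (fun p : Fin d => (Mz.map (fun z : ℤ => (z : ℝ))) p) := by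
    have h1 : (fun p : Fin d => (Mz.map (fun z : ℤ => (z : ℝ))) p) =
        (Subtype.val ∘ φ) := by
      funext p
      exact hrow p
    rw [h1]
    exact hBli.comp φ φ.injective
  have hunit : IsUnit (Mz.map (fun z : ℤ => (z : ℝ))) :=
    Matrix.linearIndependent_rows_iff_isUnit.mp hrowsli
  have hdetR : (Mz.map (fun z : ℤ => (z : ℝ))).det ≠ 0 :=
    ((Matrix.isUnit_iff_isUnit_det _).mp hunit).ne_zero
  have hdetz : Mz.det ≠ 0 := by
    intro h
    apply hdetR
    rw [det_cast_int, h]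
    simp
  set Mq : Matrix (Fin d) (Fin d) ℚ := Mz.map (fun z : ℤ => (z : ℚ)) with hMq
  have hdetq : Mq.det ≠ 0 := by
    rw [hMq, det_cast_int]
    exact_mod_cast hdetz
  set cq : Fin d → ℚ := fun p => ((cz p : ℚ)) with hcq
  set y : Fin d → ℚ := (Mq.det)⁻¹ • Matrix.cramer Mq cq with hy
  have hMy : Mq *ᵥ y = cq := by
    rw [hy, Matrix.mulVec_smul, Matrix.mulVec_cramer, smul_smul, inv_mul_cancel₀ hdetq, one_smul]
  set yr : Fin d → ℝ := fun q => ((y q : ℝ)) with hyr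
  have hyreq : ∀ p, (φ p : Fin d → ℝ) ⬝ᵥ yr = (cz p : ℝ) := by
    intro p
    have h1 := congrFun hMy p
    simp only [Matrix.mulVec, dotProduct] at h1
    rw [← hrow p]
    simp only [dotProduct, hyr]
    have : ∑ q, (M p q : ℝ) * (y q : ℝ) = (((∑ q, Mq p q * y q : ℚ)) : ℝ) := by
      push_cast [hMq, hMz]
      rfl
    rw [this, h1, hcq]
    push_cast
    rfl
  have hperp : ∀ w ∈ Submodule.span ℝ s, w ⬝ᵥ yr = w ⬝ᵥ x := by
    intro w hw
    induction hw using Submodule.span_induction with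
    | mem w hws =>
      set p : Fin d := φ.symm ⟨w, hsB hws⟩ with hp
      have hφp : (φ p : Fin d → ℝ) = w := by rw [hp, Equiv.apply_symm_apply]
      have h1 := hyreq p
      rw [hφp] at h1
      have h2 := hcs p (by rw [hφp]; exact hws)
      rw [hφp] at h2
      rw [h1, h2]
    | zero => simp
    | add u v hu hv hiu hiv => simp [add_dotProduct, hiu, hiv]
    | smul c u hu hiu => simp [smul_dotProduct, hiu]
  have hfeas : ∀ i, a i ⬝ᵥ yr ≤ br i := by
    intro i
    have h1 : a i ∈ Submodule.span ℝ s := by rw [hs_span]; exact hspan i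
    rw [hperp (a i) h1]
    exact hxS i
  -- the rational solution
  refine ⟨y, ?_, ?_⟩
  · intro i
    have h1 := hfeas i
    rw [← Rat.cast_le (K := ℝ)]
    push_cast
    simpa [dotProduct, ha, hbr, hyr] using h1
  · intro j
    have hd1 : 1 ≤ d := j.pos
    set F : ℕ := d.factorial * 2 ^ (L * d) with hF
    -- cramer over ℤ
    have hcram : ∀ q, Matrix.cramer Mq cq q = ((Matrix.cramer Mz cz q : ℤ) : ℚ) := by
      intro q
      rw [Matrix.cramer_apply, Matrix.cramer_apply]
      have : Mq.updateCol q cq = (Mz.updateCol q cz).map (fun z : ℤ => (z : ℚ)) := by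
        rw [hMq, hcq]
        rw [Matrix.map_updateCol]
        rfl
      rw [this, det_cast_int]
    have hyval : y j = ((Matrix.cramer Mz cz j : ℤ) : ℚ) / ((Mz.det : ℤ) : ℚ) := by
      rw [hy]
      simp only [Pi.smul_apply, smul_eq_mul]
      rw [hcram j, hMq, det_cast_int]
      rw [div_eq_mul_inv]
      ring
    -- determinant bounds
    have habs : ∀ (P : Matrix (Fin d) (Fin d) ℤ), (∀ p q, (P p q).natAbs ≤ 2 ^ L) →
        P.det.natAbs ≤ F := by
      intro P hP
      have h1 : ∀ p q, (AbsoluteValue.abs : AbsoluteValue ℤ ℤ) (P p q) ≤ ((2 ^ L : ℕ) : ℤ) := by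
        intro p q
        show |P p q| ≤ ((2 ^ L : ℕ) : ℤ)
        rw [Int.abs_eq_natAbs]
        exact_mod_cast hP p q
      have h2 := Matrix.det_le h1
      rw [Fintype.card_fin, nsmul_eq_mul] at h2
      have h5 : ((d.factorial : ℤ)) * ((2 ^ L : ℕ) : ℤ) ^ d = ((F : ℕ) : ℤ) := by
        rw [hF]
        push_cast
        rw [← pow_mul]
      rw [h5] at h2
      have h6 : (P.det.natAbs : ℤ) ≤ ((F : ℕ) : ℤ) := by
        refine le_trans (le_of_eq ?_) h2
        exact (Int.abs_eq_natAbs _).symm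
      exact_mod_cast h6
    have hDden : Mz.det.natAbs ≤ F := habs Mz hMb
    have hDnum : (Matrix.cramer Mz cz j).natAbs ≤ F := by
      rw [Matrix.cramer_apply]
      apply habs
      intro p q
      rw [Matrix.updateCol_apply]
      by_cases hq : q = j
      · simpa [hq] using hczb p
      · simpa [hq, hMz] using hMb p q
    have hq1 := qsize_div_le (Matrix.cramer Mz cz j) Mz.det hdetz F hDnum hDden
    rw [← hyval] at hq1
    calc (qsize (y j) : ℝ) ≤ (Nat.size F : ℝ) := by exact_mod_cast hq1
      _ ≤ ((d : ℝ) + 1) * L + (2 * d + 1) * Real.logb 2 (2 * d + 1) := final_bound d L hd1
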